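/- Let A be the ground truth from the context (so ‖A‖ ≤ 1 and rank(A) = r_A), with r ≥ r_A. Suppose 𝓜 is (r+r_A+1, δ)-RIP with δ ≤ 1/(3√m). Let X₊ ∈ St(m,r) and let Θ be a symmetric r×r matrix with ‖Θ‖ ≤ 2. Then Θ₊ = X₊ᵀAX₊ − X₊ᵀ[(𝓜*𝓜 − 𝓘)(X₊ΘX₊ᵀ − A)]X₊ satisfies ‖Θ₊‖ ≤ 2. -/

import Mathlib

open Matrix MeasureTheory ProbabilityTheory BigOperators

noncomputable section

/-- Frobenius norm of a real matrix. -/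
def frob {m n : ℕ} (M : Matrix (Fin m) (Fin n) ℝ) : ℝ :=
  Real.sqrt (∑ i, ∑ j, (M i j) ^ 2)

/-- Euclidean norm of a vector in `ℝⁿ`. -/
def vnorm {n : ℕ} (v : Fin n → ℝ) : ℝ :=
  Real.sqrt (∑ i, (v i) ^ 2)

/-- Spectral norm (operator 2-norm) of a real matrix. -/
def spec {m n : ℕ} (M : Matrix (Fin m) (Fin n) ℝ) : ℝ :=
  ‖LinearMap.toContinuousLinearMap (Matrix.toEuclideanLin M)‖

theorem isHermitian_tmul {m n : ℕ} (M : Matrix (Fin m) (Fin n) ℝ) :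
    (Mᵀ * M).IsHermitian := by
  simpa [Matrix.conjTranspose_eq_transpose_of_trivial] using
    Matrix.isHermitian_conjTranspose_mul_self M

theorem posSemidef_tmul {m n : ℕ} (M : Matrix (Fin m) (Fin n) ℝ) :
    (Mᵀ * M).PosSemidef := by
  simpa [Matrix.conjTranspose_eq_transpose_of_trivial] using
    Matrix.posSemidef_conjTranspose_mul_self M

/-- The `i`-th largest singular value (1-indexed) of a real matrix, i.e. the square root of the
`i`-th largest eigenvalue of `MᵀM`; junk value `0` when `i` is out of range. -/
def svalue {m n : ℕ} (M : Matrix (Fin m) (Fin n) ℝ) (i : ℕ) : ℝ :=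
  if h : 1 ≤ i ∧ i ≤ n then
    Real.sqrt ((isHermitian_tmul M).eigenvalues
      (Tuple.sort (isHermitian_tmul M).eigenvalues ⟨n - i, by omega⟩))
  else 0

/-- Membership in the Stiefel manifold `St(m,r)`. -/
def Stiefel {m r : ℕ} (X : Matrix (Fin m) (Fin r) ℝ) : Prop :=
  Xᵀ * X = 1

/-- The Loewner order on (symmetric) real matrices: `A ⪯ B`. -/
def loewnerLE {m : ℕ} (A B : Matrix (Fin m) (Fin m) ℝ) : Prop :=
  (B - A).PosSemidef

open scoped MatrixOrder in
/-- The inverse of the positive semidefinite square root of a matrix (junk value `0` when the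
matrix is not positive semidefinite). -/
def sqrtInv {r : ℕ} (S : Matrix (Fin r) (Fin r) ℝ) : Matrix (Fin r) (Fin r) ℝ :=
  haveI := Classical.propDecidable S.PosSemidef
  if h : S.PosSemidef then (CFC.sqrt S)⁻¹ else 0

/-- The linear sensing map `𝓜` determined by feature matrices `M_i`:
`𝓜(B)_i = Tr(M_iᵀ B)`. -/
def calM {m n : ℕ} (Ms : Fin n → Matrix (Fin m) (Fin m) ℝ)
    (B : Matrix (Fin m) (Fin m) ℝ) : Fin n → ℝ :=
  fun i => ((Ms i)ᵀ * B).trace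

/-- The adjoint `𝓜*` of the sensing map: `𝓜*(y) = ∑ i, y_i M_i`. -/
def calMadj {m n : ℕ} (Ms : Fin n → Matrix (Fin m) (Fin m) ℝ)
    (y : Fin n → ℝ) : Matrix (Fin m) (Fin m) ℝ :=
  ∑ i, y i • Ms i

/-- `(𝓜*𝓜 − 𝓘)(B)`. -/
def calE {m n : ℕ} (Ms : Fin n → Matrix (Fin m) (Fin m) ℝ)
    (B : Matrix (Fin m) (Fin m) ℝ) : Matrix (Fin m) (Fin m) ℝ :=
  calMadj Ms (calM Ms B) - B

/-- The `(s, δ)`-restricted isometry property for the sensing map determined by `Ms`. -/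
def IsRIP {m n : ℕ} (Ms : Fin n → Matrix (Fin m) (Fin m) ℝ) (s : ℕ) (δ : ℝ) : Prop :=
  ∀ B : Matrix (Fin m) (Fin m) ℝ, B.IsSymm → B.rank ≤ s →
    (1 - δ) * frob B ^ 2 ≤ vnorm (calM Ms B) ^ 2 ∧
      vnorm (calM Ms B) ^ 2 ≤ (1 + δ) * frob B ^ 2

/-- The Riemannian gradient on the Stiefel manifold obtained from the Euclidean gradient `g`
at the point `X`. -/
def Rgrad {m r : ℕ} (X g : Matrix (Fin m) (Fin r) ℝ) : Matrix (Fin m) (Fin r) ℝ :=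
  (1 - X * Xᵀ) * g + (2⁻¹ : ℝ) • (X * (Xᵀ * g - gᵀ * X))

/-- One step of Riemannian gradient descent (with `μ = 2`) for the weight-normalized
matrix sensing problem. -/
def RGDstep {m r n : ℕ} (Ms : Fin n → Matrix (Fin m) (Fin m) ℝ)
    (A : Matrix (Fin m) (Fin m) ℝ) (η : ℝ)
    (p : Matrix (Fin m) (Fin r) ℝ × Matrix (Fin r) (Fin r) ℝ) :
    Matrix (Fin m) (Fin r) ℝ × Matrix (Fin r) (Fin r) ℝ :=
  let X := p.1
  let Θ := p.2
  let Gt := calMadj Ms (calM Ms (X * Θ * Xᵀ - A)) * X * Θ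
  let G := Rgrad X Gt
  let X' := (X - η • G) * sqrtInv (1 + η ^ 2 • (Gᵀ * G))
  let Θ' := X'ᵀ * A * X' - X'ᵀ * calE Ms (X' * Θ * X'ᵀ - A) * X'
  (X', Θ')

/-- The standard Gaussian ensemble on `m × r` real matrices (i.i.d. `N(0,1)` entries). -/
def gaussianEnsemble (m r : ℕ) : Measure (Fin m → Fin r → ℝ) :=
  Measure.pi fun _ : Fin m => Measure.pi fun _ : Fin r => gaussianReal 0 1

end

noncomputable section

open scoped Matrix.Norms.L2Operator

def minner {m n : ℕ} (B C : Matrix (Fin m) (Fin n) ℝ) : ℝ := ∑ i, ∑ j, B i j * C i j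

lemma spec_eq_norm {m n : ℕ} (M : Matrix (Fin m) (Fin n) ℝ) : spec M = ‖M‖ := rfl

lemma spec_nonneg {m n : ℕ} (M : Matrix (Fin m) (Fin n) ℝ) : 0 ≤ spec M := norm_nonneg _

lemma spec_sub_le {m n : ℕ} (M N : Matrix (Fin m) (Fin n) ℝ) :
    spec (M - N) ≤ spec M + spec N := by
  simp only [spec_eq_norm]; exact norm_sub_le M N

lemma spec_mul_le {m n k : ℕ} (M : Matrix (Fin m) (Fin n) ℝ) (N : Matrix (Fin n) (Fin k) ℝ) :
    spec (M * N) ≤ spec M * spec N := by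
  simp only [spec_eq_norm]; exact Matrix.l2_opNorm_mul M N

lemma spec_transpose {m n : ℕ} (M : Matrix (Fin m) (Fin n) ℝ) : spec Mᵀ = spec M := by
  simp only [spec_eq_norm]
  rw [← Matrix.conjTranspose_eq_transpose_of_trivial]
  exact Matrix.l2_opNorm_conjTranspose M

lemma spec_le_bound {m n : ℕ} (M : Matrix (Fin m) (Fin n) ℝ) (c : ℝ) (hc : 0 ≤ c)
    (h : ∀ x : Fin n → ℝ, Real.sqrt (∑ i, (M *ᵥ x) i ^ 2) ≤ c * Real.sqrt (∑ i, x i ^ 2)) :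
    spec M ≤ c := by
  apply ContinuousLinearMap.opNorm_le_bound _ hc
  intro x
  have hx : ‖x‖ = Real.sqrt (∑ i, ((WithLp.equiv 2 (Fin n → ℝ)) x) i ^ 2) := by
    rw [EuclideanSpace.norm_eq]
    congr 1; apply Finset.sum_congr rfl; intro i _; rw [Real.norm_eq_abs, sq_abs]; rfl
  have := h ((WithLp.equiv 2 (Fin n → ℝ)) x)
  rw [← hx] at this
  refine le_trans ?_ this
  rw [LinearMap.coe_toContinuousLinearMap', toEuclideanLin_apply, EuclideanSpace.norm_eq]
  apply le_of_eq; congr 1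
  apply Finset.sum_congr rfl; intro i _; rw [Real.norm_eq_abs, sq_abs]; rfl

lemma spec_mulVec_le {m n : ℕ} (M : Matrix (Fin m) (Fin n) ℝ) (x : Fin n → ℝ) :
    Real.sqrt (∑ i, (M *ᵥ x) i ^ 2) ≤ spec M * Real.sqrt (∑ i, x i ^ 2) := by
  have h := (LinearMap.toContinuousLinearMap (Matrix.toEuclideanLin M)).le_opNorm
    ((WithLp.equiv 2 (Fin n → ℝ)).symm x)
  have h1 : ‖(WithLp.equiv 2 (Fin n → ℝ)).symm x‖ = Real.sqrt (∑ i, x i ^ 2) := by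
    rw [EuclideanSpace.norm_eq]
    congr 1; apply Finset.sum_congr rfl; intro i _; rw [Real.norm_eq_abs, sq_abs]; rfl
  have h2 : ‖(LinearMap.toContinuousLinearMap (Matrix.toEuclideanLin M))
      ((WithLp.equiv 2 (Fin n → ℝ)).symm x)‖ = Real.sqrt (∑ i, (M *ᵥ x) i ^ 2) := by
    rw [LinearMap.coe_toContinuousLinearMap', toEuclideanLin_apply, EuclideanSpace.norm_eq]
    congr 1; apply Finset.sum_congr rfl; intro i _
    rw [Real.norm_eq_abs, sq_abs]; rfl
  rw [h1, h2] at h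
  exact h

lemma spec_diagonal_le {k : ℕ} (v : Fin k → ℝ) (c : ℝ) (hc : 0 ≤ c) (h : ∀ i, |v i| ≤ c) :
    spec (Matrix.diagonal v) ≤ c := by
  apply spec_le_bound _ _ hc
  intro x
  rw [← Real.sqrt_sq hc, ← Real.sqrt_mul (sq_nonneg c)]
  apply Real.sqrt_le_sqrt
  rw [Finset.mul_sum]
  apply Finset.sum_le_sum
  intro i _
  rw [Matrix.mulVec_diagonal, mul_pow]
  apply mul_le_mul_of_nonneg_right _ (sq_nonneg _)
  calc v i ^ 2 = |v i| ^ 2 := (sq_abs _).symm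
    _ ≤ c ^ 2 := by apply pow_le_pow_left₀ (abs_nonneg _) (h i)

lemma sum_sq_mulVec {m r : ℕ} (X : Matrix (Fin m) (Fin r) ℝ) (h : Xᵀ * X = 1)
    (x : Fin r → ℝ) : ∑ i, (X *ᵥ x) i ^ 2 = ∑ i, x i ^ 2 := by
  have h1 : ∑ i, (X *ᵥ x) i ^ 2 = (X *ᵥ x) ⬝ᵥ (X *ᵥ x) := by
    simp [dotProduct, pow_two]
  have h2 : ∑ i, x i ^ 2 = x ⬝ᵥ x := by simp [dotProduct, pow_two]
  rw [h1, h2, Matrix.dotProduct_mulVec]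
  have : (X *ᵥ x) ᵥ* X = (Xᵀ * X) *ᵥ x := by
    rw [← Matrix.mulVec_mulVec]
    rw [show X = (Xᵀ)ᵀ by simp, Matrix.vecMul_transpose]
    simp
  rw [this, h, Matrix.one_mulVec]

lemma stiefel_spec_le {m r : ℕ} (X : Matrix (Fin m) (Fin r) ℝ) (h : Xᵀ * X = 1) :
    spec X ≤ 1 := by
  apply spec_le_bound _ _ zero_le_one
  intro x
  rw [sum_sq_mulVec X h, one_mul]

lemma spec_symm_le {k : ℕ} (S : Matrix (Fin k) (Fin k) ℝ) (hS : S.IsSymm) (c : ℝ) (hc : 0 ≤ c)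
    (h : ∀ u : Fin k → ℝ, ∑ i, u i ^ 2 = 1 → |u ⬝ᵥ (S *ᵥ u)| ≤ c) : spec S ≤ c := by
  have hHerm : S.IsHermitian := by
    rw [Matrix.IsHermitian, Matrix.conjTranspose_eq_transpose_of_trivial]; exact hS
  have hst := hHerm.spectral_theorem
  set V : Matrix (Fin k) (Fin k) ℝ := (hHerm.eigenvectorUnitary : Matrix (Fin k) (Fin k) ℝ) with hV
  have hVu : Vᵀ * V = 1 := by
    rw [← Matrix.conjTranspose_eq_transpose_of_trivial]
    exact Matrix.mem_unitaryGroup_iff'.mp hHerm.eigenvectorUnitary.2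
  have hVu2 : V * Vᵀ = 1 := by
    rw [← Matrix.conjTranspose_eq_transpose_of_trivial]
    exact Matrix.mem_unitaryGroup_iff.mp hHerm.eigenvectorUnitary.2
  have hVs : spec V ≤ 1 := stiefel_spec_le V hVu
  have hVt : spec Vᵀ ≤ 1 := by rw [spec_transpose]; exact hVs
  have heig : ∀ i, |hHerm.eigenvalues i| ≤ c := by
    intro i
    have he := hHerm.eigenvalues_eq i
    have hu : ∑ j, (hHerm.eigenvectorBasis i : Fin k → ℝ) j ^ 2 = 1 := by
      have := hHerm.eigenvectorBasis.orthonormal.1 i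
      rw [EuclideanSpace.norm_eq] at this
      have h2 := congrArg (fun t => t ^ 2) this
      simp only [one_pow] at h2
      rw [Real.sq_sqrt (by positivity)] at h2
      rw [← h2]
      apply Finset.sum_congr rfl
      intro j _
      rw [Real.norm_eq_abs, sq_abs]
    have := h _ hu
    rw [he]
    simpa using this
  have hD : spec (Matrix.diagonal (RCLike.ofReal ∘ hHerm.eigenvalues) :
      Matrix (Fin k) (Fin k) ℝ) ≤ c := by
    apply spec_diagonal_le _ _ hc
    intro i
    simpa using heig i
  calc spec S = spec (V * Matrix.diagonal (RCLike.ofReal ∘ hHerm.eigenvalues) * Vᵀ) := by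
        conv_lhs => rw [hst]
        rw [Unitary.conjStarAlgAut_apply, Matrix.star_eq_conjTranspose, Matrix.conjTranspose_eq_transpose_of_trivial]
    _ ≤ spec (V * Matrix.diagonal (RCLike.ofReal ∘ hHerm.eigenvalues)) * spec Vᵀ :=
        spec_mul_le _ _
    _ ≤ spec V * spec (Matrix.diagonal (RCLike.ofReal ∘ hHerm.eigenvalues)) * spec Vᵀ := by
        apply mul_le_mul_of_nonneg_right (spec_mul_le _ _) (spec_nonneg _)
    _ ≤ 1 * c * 1 := by
        apply mul_le_mul _ hVt (spec_nonneg _) (by positivity)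
        apply mul_le_mul hVs hD (spec_nonneg _) zero_le_one
    _ = c := by ring

lemma frob_nonneg {m n : ℕ} (B : Matrix (Fin m) (Fin n) ℝ) : 0 ≤ frob B := Real.sqrt_nonneg _

lemma frob_sq {m n : ℕ} (B : Matrix (Fin m) (Fin n) ℝ) :
    frob B ^ 2 = ∑ i, ∑ j, (B i j) ^ 2 := Real.sq_sqrt (by positivity)

lemma vnorm_sq {n : ℕ} (v : Fin n → ℝ) : vnorm v ^ 2 = ∑ i, (v i) ^ 2 :=
  Real.sq_sqrt (by positivity)

lemma frob_eq_zero {m n : ℕ} {B : Matrix (Fin m) (Fin n) ℝ} (h : frob B = 0) : B = 0 := by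
  have h2 : ∑ i, ∑ j, (B i j) ^ 2 = 0 := by
    have := frob_sq B; rw [h] at this; simpa using this.symm
  ext i j
  have hnn : ∀ i ∈ Finset.univ, (0:ℝ) ≤ ∑ j, (B i j) ^ 2 := fun i _ => by positivity
  have hrow := (Finset.sum_eq_zero_iff_of_nonneg hnn).mp h2 i (Finset.mem_univ i)
  have := (Finset.sum_eq_zero_iff_of_nonneg (fun j _ => sq_nonneg (B i j))).mp hrow j
    (Finset.mem_univ j)
  simpa [pow_eq_zero_iff] using this

lemma frob_triangle_sub {m n : ℕ} (P Q : Matrix (Fin m) (Fin n) ℝ) :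
    frob (P - Q) ≤ frob P + frob Q := by
  have hf : ∀ M : Matrix (Fin m) (Fin n) ℝ,
      frob M = ‖((WithLp.equiv 2 (Fin m × Fin n → ℝ)).symm (fun p => M p.1 p.2) :
        EuclideanSpace ℝ (Fin m × Fin n))‖ := by
    intro M
    rw [EuclideanSpace.norm_eq, frob]
    congr 1
    rw [Fintype.sum_prod_type]
    refine Finset.sum_congr rfl fun i _ => Finset.sum_congr rfl fun j _ => ?_
    rw [Real.norm_eq_abs, sq_abs]; rfl
  rw [hf, hf, hf]
  have : ((WithLp.equiv 2 (Fin m × Fin n → ℝ)).symm (fun p => (P - Q) p.1 p.2) :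
      EuclideanSpace ℝ (Fin m × Fin n)) =
      (WithLp.equiv 2 (Fin m × Fin n → ℝ)).symm (fun p => P p.1 p.2) -
      (WithLp.equiv 2 (Fin m × Fin n → ℝ)).symm (fun p => Q p.1 p.2) := rfl
  rw [this]
  exact norm_sub_le _ _

lemma calM_apply {m n : ℕ} (Ms : Fin n → Matrix (Fin m) (Fin m) ℝ)
    (B : Matrix (Fin m) (Fin m) ℝ) (k : Fin n) :
    calM Ms B k = ∑ i, ∑ j, Ms k i j * B i j := by
  simp only [calM, Matrix.trace, Matrix.diag, Matrix.mul_apply, Matrix.transpose_apply]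
  exact Finset.sum_comm

lemma calM_addsmul {m n : ℕ} (Ms : Fin n → Matrix (Fin m) (Fin m) ℝ)
    (B C : Matrix (Fin m) (Fin m) ℝ) (t : ℝ) (k : Fin n) :
    calM Ms (B + t • C) k = calM Ms B k + t * calM Ms C k := by
  simp only [calM_apply, Matrix.add_apply, Matrix.smul_apply, smul_eq_mul]
  rw [Finset.mul_sum]
  rw [← Finset.sum_add_distrib]
  refine Finset.sum_congr rfl fun i _ => ?_
  rw [Finset.mul_sum, ← Finset.sum_add_distrib]
  refine Finset.sum_congr rfl fun j _ => by ring

lemma minner_calE {m n : ℕ} (Ms : Fin n → Matrix (Fin m) (Fin m) ℝ)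
    (B C : Matrix (Fin m) (Fin m) ℝ) :
    minner (calE Ms B) C = (∑ k, calM Ms B k * calM Ms C k) - minner B C := by
  simp only [calE, minner, Matrix.sub_apply]
  simp_rw [sub_mul, Finset.sum_sub_distrib]
  congr 1
  simp only [calMadj, Matrix.sum_apply, Matrix.smul_apply, smul_eq_mul, Finset.sum_mul]
  calc (∑ i, ∑ j, ∑ k, calM Ms B k * Ms k i j * C i j)
      = ∑ i, ∑ k, ∑ j, calM Ms B k * Ms k i j * C i j :=
        Finset.sum_congr rfl fun i _ => Finset.sum_comm
    _ = ∑ k, ∑ i, ∑ j, calM Ms B k * Ms k i j * C i j := Finset.sum_comm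
    _ = ∑ k, calM Ms B k * calM Ms C k := by
        refine Finset.sum_congr rfl fun k _ => ?_
        rw [calM_apply Ms C k, Finset.mul_sum]
        refine Finset.sum_congr rfl fun i _ => ?_
        rw [Finset.mul_sum]
        refine Finset.sum_congr rfl fun j _ => by ring

lemma isSymm_addsmul {m : ℕ} {B C : Matrix (Fin m) (Fin m) ℝ} (hB : B.IsSymm) (hC : C.IsSymm)
    (t : ℝ) : (B + t • C).IsSymm := by
  unfold Matrix.IsSymm at *
  rw [Matrix.transpose_add, Matrix.transpose_smul, hB, hC]

lemma calE_inner_bound {m n s : ℕ} (Ms : Fin n → Matrix (Fin m) (Fin m) ℝ)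
    {δ : ℝ} (hδ0 : 0 ≤ δ) (hRIP : IsRIP Ms s δ)
    (B C : Matrix (Fin m) (Fin m) ℝ) (hB : B.IsSymm) (hC : C.IsSymm)
    (hp : (B + (1:ℝ) • C).rank ≤ s) (hm : (B + (-1:ℝ) • C).rank ≤ s) :
    |minner (calE Ms B) C| ≤ δ / 2 * (frob B ^ 2 + frob C ^ 2) := by
  obtain ⟨lp, up⟩ := hRIP (B + (1:ℝ) • C) (isSymm_addsmul hB hC 1) hp
  obtain ⟨lm, um⟩ := hRIP (B + (-1:ℝ) • C) (isSymm_addsmul hB hC (-1)) hm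
  have key : minner (calE Ms B) C =
      ((vnorm (calM Ms (B + (1:ℝ) • C)) ^ 2 - frob (B + (1:ℝ) • C) ^ 2)
      - (vnorm (calM Ms (B + (-1:ℝ) • C)) ^ 2 - frob (B + (-1:ℝ) • C) ^ 2)) / 4 := by
    rw [minner_calE]
    have hv : ∀ t : ℝ, vnorm (calM Ms (B + t • C)) ^ 2 =
        ∑ k, (calM Ms B k + t * calM Ms C k) ^ 2 := by
      intro t
      rw [vnorm_sq]
      exact Finset.sum_congr rfl fun k _ => by rw [calM_addsmul]
    have hfr : ∀ t : ℝ, frob (B + t • C) ^ 2 =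
        ∑ i, ∑ j, (B i j + t * C i j) ^ 2 := by
      intro t
      rw [frob_sq]
      refine Finset.sum_congr rfl fun i _ => Finset.sum_congr rfl fun j _ => by
        simp [Matrix.add_apply, Matrix.smul_apply]
    rw [hv 1, hv (-1), hfr 1, hfr (-1)]
    have e1 : (∑ k, (calM Ms B k + 1 * calM Ms C k) ^ 2)
        - ∑ k, (calM Ms B k + (-1) * calM Ms C k) ^ 2
        = 4 * ∑ k, calM Ms B k * calM Ms C k := by
      rw [← Finset.sum_sub_distrib, Finset.mul_sum]
      exact Finset.sum_congr rfl fun k _ => by ring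
    have e2 : (∑ i, ∑ j, (B i j + 1 * C i j) ^ 2) - ∑ i, ∑ j, (B i j + (-1) * C i j) ^ 2
        = 4 * minner B C := by
      rw [← Finset.sum_sub_distrib, minner, Finset.mul_sum]
      refine Finset.sum_congr rfl fun i _ => ?_
      rw [← Finset.sum_sub_distrib, Finset.mul_sum]
      exact Finset.sum_congr rfl fun j _ => by ring
    have : (∑ k, (calM Ms B k + 1 * calM Ms C k) ^ 2)
        - (∑ i, ∑ j, (B i j + 1 * C i j) ^ 2)
        - ((∑ k, (calM Ms B k + (-1) * calM Ms C k) ^ 2)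
          - ∑ i, ∑ j, (B i j + (-1) * C i j) ^ 2)
        = 4 * ∑ k, calM Ms B k * calM Ms C k - 4 * minner B C := by
      rw [← e1, ← e2]; ring
    rw [this]; ring
  have hfp : 0 ≤ frob (B + (1:ℝ) • C) ^ 2 := sq_nonneg _
  have hfm : 0 ≤ frob (B + (-1:ℝ) • C) ^ 2 := sq_nonneg _
  have habs1 : |vnorm (calM Ms (B + (1:ℝ) • C)) ^ 2 - frob (B + (1:ℝ) • C) ^ 2|
      ≤ δ * frob (B + (1:ℝ) • C) ^ 2 := by
    rw [abs_le]; constructor <;> nlinarith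
  have habs2 : |vnorm (calM Ms (B + (-1:ℝ) • C)) ^ 2 - frob (B + (-1:ℝ) • C) ^ 2|
      ≤ δ * frob (B + (-1:ℝ) • C) ^ 2 := by
    rw [abs_le]; constructor <;> nlinarith
  have hsum : frob (B + (1:ℝ) • C) ^ 2 + frob (B + (-1:ℝ) • C) ^ 2
      = 2 * (frob B ^ 2 + frob C ^ 2) := by
    rw [frob_sq, frob_sq, frob_sq, frob_sq]
    have h2 : 2 * ((∑ i, ∑ j, B i j ^ 2) + ∑ i, ∑ j, C i j ^ 2)
        = ∑ i, ∑ j, (2 * (B i j ^ 2 + C i j ^ 2)) := by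
      rw [← Finset.sum_add_distrib, Finset.mul_sum]
      refine Finset.sum_congr rfl fun i _ => ?_
      rw [← Finset.sum_add_distrib, Finset.mul_sum]
    rw [h2, ← Finset.sum_add_distrib]
    refine Finset.sum_congr rfl fun i _ => ?_
    rw [← Finset.sum_add_distrib]
    refine Finset.sum_congr rfl fun j _ => ?_
    simp only [Matrix.add_apply, Matrix.smul_apply, smul_eq_mul]
    ring
  rw [key]
  calc |((vnorm (calM Ms (B + (1:ℝ) • C)) ^ 2 - frob (B + (1:ℝ) • C) ^ 2)
      - (vnorm (calM Ms (B + (-1:ℝ) • C)) ^ 2 - frob (B + (-1:ℝ) • C) ^ 2)) / 4|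
      ≤ (|vnorm (calM Ms (B + (1:ℝ) • C)) ^ 2 - frob (B + (1:ℝ) • C) ^ 2|
        + |vnorm (calM Ms (B + (-1:ℝ) • C)) ^ 2 - frob (B + (-1:ℝ) • C) ^ 2|) / 4 := by
        rw [abs_div, show |(4:ℝ)| = 4 by norm_num]
        gcongr
        calc |vnorm (calM Ms (B + (1:ℝ) • C)) ^ 2 - frob (B + (1:ℝ) • C) ^ 2
            - (vnorm (calM Ms (B + (-1:ℝ) • C)) ^ 2 - frob (B + (-1:ℝ) • C) ^ 2)|
            ≤ |vnorm (calM Ms (B + (1:ℝ) • C)) ^ 2 - frob (B + (1:ℝ) • C) ^ 2|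
              + |-(vnorm (calM Ms (B + (-1:ℝ) • C)) ^ 2 - frob (B + (-1:ℝ) • C) ^ 2)| := by
              rw [sub_eq_add_neg]; exact abs_add_le _ _
          _ = _ := by rw [abs_neg]
    _ ≤ δ / 2 * (frob B ^ 2 + frob C ^ 2) := by nlinarith

lemma rank_add_le' {a b : ℕ} (A B : Matrix (Fin a) (Fin b) ℝ) :
    (A + B).rank ≤ A.rank + B.rank := by
  have h : LinearMap.range (A + B).mulVecLin ≤
      LinearMap.range A.mulVecLin ⊔ LinearMap.range B.mulVecLin := by
    rintro x ⟨v, rfl⟩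
    rw [Matrix.mulVecLin_add, LinearMap.add_apply]
    exact Submodule.add_mem_sup (LinearMap.mem_range_self _ v) (LinearMap.mem_range_self _ v)
  exact le_trans (Submodule.finrank_mono h)
    (Submodule.finrank_add_le_finrank_add_finrank _ _)

lemma rank_neg' {a b : ℕ} (A : Matrix (Fin a) (Fin b) ℝ) : (-A).rank = A.rank := by
  have h : (-A).mulVecLin = -A.mulVecLin := by
    ext v
    simp [Matrix.mulVecLin_apply, Matrix.neg_mulVec]
  unfold Matrix.rank
  rw [h, LinearMap.range_neg]

lemma rank_smul_vecMulVec {a : ℕ} (t : ℝ) (v : Fin a → ℝ) :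
    (t • Matrix.vecMulVec v v).rank ≤ 1 := by
  have h : t • Matrix.vecMulVec v v = Matrix.vecMulVec (t • v) v := by
    ext i j
    simp [Matrix.vecMulVec_apply, mul_assoc]
  rw [h, Matrix.vecMulVec_eq (Fin 1)]
  calc (Matrix.replicateCol (Fin 1) (t • v) * Matrix.replicateRow (Fin 1) v).rank
      ≤ (Matrix.replicateCol (Fin 1) (t • v)).rank := Matrix.rank_mul_le_left _ _
    _ ≤ Fintype.card (Fin 1) := Matrix.rank_le_card_width _
    _ = 1 := by simp

lemma calE_quad_bound {m n s : ℕ} (Ms : Fin n → Matrix (Fin m) (Fin m) ℝ)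
    {δ : ℝ} (hδ0 : 0 ≤ δ) (hRIP : IsRIP Ms s δ)
    (B : Matrix (Fin m) (Fin m) ℝ) (hB : B.IsSymm) (hrk : B.rank + 1 ≤ s)
    (v : Fin m → ℝ) (hv : ∑ i, v i ^ 2 = 1) :
    |v ⬝ᵥ (calE Ms B *ᵥ v)| ≤ δ * frob B := by
  rcases eq_or_lt_of_le (frob_nonneg B) with h0 | hpos
  · have hB0 : B = 0 := frob_eq_zero h0.symm
    subst hB0
    have : calE Ms 0 = 0 := by
      simp [calE, calM, calMadj]
    rw [this]
    simp [Matrix.zero_mulVec, dotProduct_zero]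
    positivity
  set t := frob B with ht
  set C := t • Matrix.vecMulVec v v with hCdef
  have hCsymm : C.IsSymm := by
    unfold Matrix.IsSymm
    rw [hCdef, Matrix.transpose_smul]
    congr 1
    ext i j
    simp [Matrix.vecMulVec_apply, mul_comm]
  have hrkC := rank_smul_vecMulVec t v
  have hrkp : (B + (1:ℝ) • C).rank ≤ s := by
    calc (B + (1:ℝ) • C).rank ≤ B.rank + ((1:ℝ) • C).rank := rank_add_le' _ _
      _ ≤ B.rank + 1 := by
          rw [one_smul]; exact add_le_add_right hrkC _
      _ ≤ s := hrk
  have hrkm : (B + (-1:ℝ) • C).rank ≤ s := by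
    have : ((-1:ℝ) • C).rank ≤ 1 := by
      rw [hCdef, smul_smul]
      exact rank_smul_vecMulVec _ v
    calc (B + (-1:ℝ) • C).rank ≤ B.rank + ((-1:ℝ) • C).rank := rank_add_le' _ _
      _ ≤ B.rank + 1 := add_le_add_right this _
      _ ≤ s := hrk
  have hkey := calE_inner_bound Ms hδ0 hRIP B C hB hCsymm
    (by rw [one_smul] at hrkp ⊢; exact hrkp) hrkm
  have hfC : frob C ^ 2 = t ^ 2 := by
    rw [frob_sq]
    have hstep : ∀ i, ∑ j, (C i j) ^ 2 = t ^ 2 * v i ^ 2 := by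
      intro i
      have : ∀ j, (C i j) ^ 2 = (t ^ 2 * v i ^ 2) * v j ^ 2 := by
        intro j
        rw [hCdef]
        simp only [Matrix.smul_apply, Matrix.vecMulVec_apply, smul_eq_mul]
        ring
      rw [Finset.sum_congr rfl fun j _ => this j, ← Finset.mul_sum, hv, mul_one]
    rw [Finset.sum_congr rfl fun i _ => hstep i, ← Finset.mul_sum, hv, mul_one]
  have hmC : minner (calE Ms B) C = t * (v ⬝ᵥ (calE Ms B *ᵥ v)) := by
    unfold minner
    rw [dotProduct, Finset.mul_sum]
    refine Finset.sum_congr rfl fun i _ => ?_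
    rw [Matrix.mulVec, dotProduct, Finset.mul_sum, Finset.mul_sum]
    refine Finset.sum_congr rfl fun j _ => ?_
    rw [hCdef]
    simp only [Matrix.smul_apply, Matrix.vecMulVec_apply, smul_eq_mul]
    ring
  rw [hmC] at hkey
  rw [abs_mul, abs_of_pos hpos] at hkey
  have : t * |v ⬝ᵥ calE Ms B *ᵥ v| ≤ t * (δ * t) := by
    calc t * |v ⬝ᵥ calE Ms B *ᵥ v| ≤ δ / 2 * (frob B ^ 2 + frob C ^ 2) := hkey
      _ = t * (δ * t) := by rw [hfC, ← ht]; ring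
  exact le_of_mul_le_mul_left this hpos

lemma frob_transpose {m n : ℕ} (M : Matrix (Fin m) (Fin n) ℝ) : frob Mᵀ = frob M := by
  unfold frob
  congr 1
  rw [Finset.sum_comm]
  rfl

lemma frob_mul_left_orth {m r k : ℕ} (X : Matrix (Fin m) (Fin r) ℝ) (hX : Xᵀ * X = 1)
    (N : Matrix (Fin r) (Fin k) ℝ) : frob (X * N) = frob N := by
  unfold frob
  congr 1
  rw [Finset.sum_comm]
  conv_rhs => rw [Finset.sum_comm]
  refine Finset.sum_congr rfl fun j _ => ?_
  have := sum_sq_mulVec X hX (fun k => N k j)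
  calc ∑ i, (X * N) i j ^ 2 = ∑ i, (X *ᵥ (fun k => N k j)) i ^ 2 := by
        refine Finset.sum_congr rfl fun i _ => ?_
        simp [Matrix.mul_apply, Matrix.mulVec, dotProduct]
    _ = ∑ i, N i j ^ 2 := this

lemma frob_le_sqrt_spec {k : ℕ} (Θ : Matrix (Fin k) (Fin k) ℝ) :
    frob Θ ≤ Real.sqrt k * spec Θ := by
  have hcol : ∀ j, ∑ i, Θ i j ^ 2 ≤ spec Θ ^ 2 := by
    intro j
    have hx := spec_mulVec_le Θ (Pi.single j 1)
    have h1 : ∑ i, (Pi.single j 1 : Fin k → ℝ) i ^ 2 = 1 := by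
      rw [Finset.sum_eq_single j]
      · simp
      · intro b _ hb; simp [Pi.single_apply, hb]
      · simp
    rw [h1, Real.sqrt_one, mul_one] at hx
    have h2 : ∀ i, (Θ *ᵥ Pi.single j 1) i = Θ i j := by
      intro i
      simp [Matrix.mulVec_single]
    have h3 : Real.sqrt (∑ i, Θ i j ^ 2) ≤ spec Θ := by
      calc Real.sqrt (∑ i, Θ i j ^ 2) = Real.sqrt (∑ i, (Θ *ᵥ Pi.single j 1) i ^ 2) := by
            congr 1; exact Finset.sum_congr rfl fun i _ => by rw [h2]
        _ ≤ spec Θ := hx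
    calc ∑ i, Θ i j ^ 2 = Real.sqrt (∑ i, Θ i j ^ 2) ^ 2 := by
          rw [Real.sq_sqrt (by positivity)]
      _ ≤ spec Θ ^ 2 := by
          apply pow_le_pow_left₀ (Real.sqrt_nonneg _) h3
  have hf2 : frob Θ ^ 2 ≤ k * spec Θ ^ 2 := by
    rw [frob_sq, Finset.sum_comm]
    calc (∑ j, ∑ i, Θ i j ^ 2) ≤ ∑ _j : Fin k, spec Θ ^ 2 :=
          Finset.sum_le_sum fun j _ => hcol j
      _ = k * spec Θ ^ 2 := by rw [Finset.sum_const, Finset.card_univ, Fintype.card_fin,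
            nsmul_eq_mul]
  calc frob Θ = Real.sqrt (frob Θ ^ 2) := (Real.sqrt_sq (frob_nonneg Θ)).symm
    _ ≤ Real.sqrt (k * spec Θ ^ 2) := Real.sqrt_le_sqrt hf2
    _ = Real.sqrt k * spec Θ := by
        rw [Real.sqrt_mul (by positivity), Real.sqrt_sq (spec_nonneg _)]

lemma frob_diagonal_sq {k : ℕ} (d : Fin k → ℝ) :
    frob (Matrix.diagonal d) ^ 2 = ∑ i, d i ^ 2 := by
  rw [frob_sq]
  refine Finset.sum_congr rfl fun i _ => ?_
  have : ∀ j, (Matrix.diagonal d) i j ^ 2 = if j = i then d i ^ 2 else 0 := by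
    intro j
    by_cases h : j = i
    · subst h; simp [Matrix.diagonal_apply_eq]
    · rw [Matrix.diagonal_apply_ne' d h]
      simp [h]
  rw [Finset.sum_congr rfl fun j _ => this j, Finset.sum_ite_eq' Finset.univ i
    (fun _ => d i ^ 2)]
  simp

lemma stiefel_dim_le {m r : ℕ} (X : Matrix (Fin m) (Fin r) ℝ) (h : Xᵀ * X = 1) : r ≤ m := by
  have h1 : (1 : Matrix (Fin r) (Fin r) ℝ).rank = r := by rw [Matrix.rank_one, Fintype.card_fin]
  calc r = (1 : Matrix (Fin r) (Fin r) ℝ).rank := h1.symm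
    _ = (Xᵀ * X).rank := by rw [h]
    _ ≤ X.rank := Matrix.rank_mul_le_right _ _
    _ ≤ Fintype.card (Fin m) := Matrix.rank_le_card_height _
    _ = m := Fintype.card_fin m

lemma smul_one_eq_diag {k : ℕ} (c : ℝ) :
    c • (1 : Matrix (Fin k) (Fin k) ℝ) = Matrix.diagonal (fun _ => c) := by
  ext i j
  by_cases h : i = j <;>
    simp [h, Matrix.one_apply, Matrix.diagonal_apply, Matrix.smul_apply]

lemma eig_of_det_zero {k : ℕ} (H : Matrix (Fin k) (Fin k) ℝ) (hH : H.IsHermitian) (c : ℝ)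
    (hdet : (c • (1 : Matrix (Fin k) (Fin k) ℝ) - H).det = 0) :
    ∃ j, c = hH.eigenvalues j := by
  set V : Matrix (Fin k) (Fin k) ℝ := (hH.eigenvectorUnitary : Matrix (Fin k) (Fin k) ℝ)
    with hV
  have hmem := hH.eigenvectorUnitary.2
  rw [Unitary.mem_iff] at hmem
  obtain ⟨hm1, hm2⟩ := hmem
  have hst := hH.spectral_theorem
  rw [Unitary.conjStarAlgAut_apply] at hst
  set D : Matrix (Fin k) (Fin k) ℝ := Matrix.diagonal (RCLike.ofReal ∘ hH.eigenvalues)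
    with hD
  have hconj : c • (1 : Matrix (Fin k) (Fin k) ℝ) - H = V * (c • 1 - D) * star V := by
    rw [Matrix.mul_sub, Matrix.sub_mul, mul_smul_comm, Matrix.mul_one, smul_mul_assoc, hm2,
      ← hst]
  have hdet2 : V.det * (c • (1:Matrix (Fin k) (Fin k) ℝ) - D).det * (star V).det = 0 := by
    rw [← Matrix.det_mul, ← Matrix.det_mul, ← hconj, hdet]
  have hdetV : (star V).det * V.det = 1 := by
    rw [← Matrix.det_mul, hm1, Matrix.det_one]
  have hmid : (c • (1:Matrix (Fin k) (Fin k) ℝ) - D).det = 0 := by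
    have : (c • (1:Matrix (Fin k) (Fin k) ℝ) - D).det * ((star V).det * V.det) = 0 := by
      rw [← hdet2]; ring
    rwa [hdetV, mul_one] at this
  rw [hD, smul_one_eq_diag, Matrix.diagonal_sub, Matrix.det_diagonal] at hmid
  obtain ⟨j, _, hj⟩ := Finset.prod_eq_zero_iff.mp hmid
  refine ⟨j, ?_⟩
  have := sub_eq_zero.mp hj
  simpa using this

lemma d_le_one {r_A : ℕ} (h1 : 1 ≤ r_A) (d : Fin r_A → ℝ) (hd : ∀ i, 0 < d i)
    (Sg : Matrix (Fin r_A) (Fin r_A) ℝ) (hSg : Sg = Matrix.diagonal d)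
    (hσ1 : svalue Sg 1 = 1) : ∀ i, d i ≤ 1 := by
  intro i
  have hcond : 1 ≤ 1 ∧ 1 ≤ r_A := ⟨le_refl 1, h1⟩
  rw [svalue, dif_pos hcond] at hσ1
  set f := (isHermitian_tmul Sg).eigenvalues with hf
  set top : Fin r_A := ⟨r_A - 1, by omega⟩ with htop
  have hE0 : 0 ≤ f (Tuple.sort f top) := (posSemidef_tmul Sg).eigenvalues_nonneg _
  have hE1 : f (Tuple.sort f top) = 1 := by
    rw [← Real.sq_sqrt hE0, hσ1]; norm_num
  have hSS : Sgᵀ * Sg = Matrix.diagonal (fun j => d j * d j) := by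
    rw [hSg, Matrix.diagonal_transpose, Matrix.diagonal_mul_diagonal]
  have hdet : ((d i * d i) • (1 : Matrix (Fin r_A) (Fin r_A) ℝ) - Sgᵀ * Sg).det = 0 := by
    rw [hSS, smul_one_eq_diag, Matrix.diagonal_sub, Matrix.det_diagonal]
    exact Finset.prod_eq_zero (Finset.mem_univ i) (by simp)
  obtain ⟨j, hj⟩ := eig_of_det_zero _ (isHermitian_tmul Sg) _ hdet
  have hle : f j ≤ f (Tuple.sort f top) := by
    have hmono := Tuple.monotone_sort f
    have hjj : j = Tuple.sort f ((Tuple.sort f).symm j) := (Equiv.apply_symm_apply _ _).symm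
    have hkk : ((Tuple.sort f).symm j) ≤ top := by
      rw [Fin.le_def]
      have := ((Tuple.sort f).symm j).isLt
      simp only [htop]
      omega
    calc f j = (f ∘ Tuple.sort f) ((Tuple.sort f).symm j) := by
          simp only [Function.comp_apply, Equiv.apply_symm_apply]
      _ ≤ (f ∘ Tuple.sort f) top := hmono hkk
      _ = f (Tuple.sort f top) := rfl
  have : d i * d i ≤ 1 := by
    rw [hE1] at hle
    calc d i * d i = f j := hj
      _ ≤ 1 := hle
  nlinarith [hd i]

lemma calE_symm {m n : ℕ} (Ms : Fin n → Matrix (Fin m) (Fin m) ℝ)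
    (hMs : ∀ i, (Ms i).IsSymm) (B : Matrix (Fin m) (Fin m) ℝ) (hB : B.IsSymm) :
    (calE Ms B).IsSymm := by
  unfold Matrix.IsSymm at *
  unfold calE calMadj
  rw [Matrix.transpose_sub, Matrix.transpose_sum, hB]
  congr 1
  exact Finset.sum_congr rfl fun k _ => by rw [Matrix.transpose_smul, hMs k]

theorem stmt6 {m r r_A n : ℕ} (h1 : 1 ≤ r_A) (h2 : r_A ≤ r)
    (κ : ℝ) (hκ : 1 ≤ κ)
    (U : Matrix (Fin m) (Fin r_A) ℝ) (hU : Stiefel U)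
    (d : Fin r_A → ℝ) (hd : ∀ i, 0 < d i)
    (Sg : Matrix (Fin r_A) (Fin r_A) ℝ) (hSg : Sg = Matrix.diagonal d)
    (hσ1 : svalue Sg 1 = 1) (hσr : svalue Sg r_A = 1 / κ)
    (A : Matrix (Fin m) (Fin m) ℝ) (hA : A = U * Sg * Uᵀ)
    (Ms : Fin n → Matrix (Fin m) (Fin m) ℝ) (hMs : ∀ i, (Ms i).IsSymm)
    (δ : ℝ) (hδ0 : 0 ≤ δ) (hδ1 : δ < 1)
    (hRIP : IsRIP Ms (r + r_A + 1) δ)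
    (hδ : δ ≤ 1 / (3 * Real.sqrt (m : ℝ)))
    (Xp : Matrix (Fin m) (Fin r) ℝ) (hXp : Stiefel Xp)
    (Θ : Matrix (Fin r) (Fin r) ℝ) (hΘsym : Θ.IsSymm) (hΘ : spec Θ ≤ 2) :
    spec (Xpᵀ * A * Xp - Xpᵀ * calE Ms (Xp * Θ * Xpᵀ - A) * Xp) ≤ 2 := by
  have hXX : Xpᵀ * Xp = 1 := hXp
  have hUU : Uᵀ * U = 1 := hU
  have hdle : ∀ i, d i ≤ 1 := d_le_one h1 d hd Sg hSg hσ1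
  have hrm : r ≤ m := stiefel_dim_le Xp hXX
  have hram : r_A ≤ m := le_trans h2 hrm
  have hm1 : 1 ≤ m := le_trans h1 hram
  -- spectral norm bounds
  have hspecSg : spec Sg ≤ 1 := by
    rw [hSg]
    exact spec_diagonal_le d 1 zero_le_one fun i => by
      rw [abs_of_pos (hd i)]; exact hdle i
  have hspecU : spec U ≤ 1 := stiefel_spec_le U hUU
  have hspecUt : spec Uᵀ ≤ 1 := by rw [spec_transpose]; exact hspecU
  have hspecXp : spec Xp ≤ 1 := stiefel_spec_le Xp hXX
  have hspecXpt : spec Xpᵀ ≤ 1 := by rw [spec_transpose]; exact hspecXp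
  have hspecA : spec A ≤ 1 := by
    rw [hA]
    calc spec (U * Sg * Uᵀ) ≤ spec (U * Sg) * spec Uᵀ := spec_mul_le _ _
      _ ≤ spec U * spec Sg * spec Uᵀ :=
          mul_le_mul_of_nonneg_right (spec_mul_le _ _) (spec_nonneg _)
      _ ≤ 1 * 1 * 1 := by
          apply mul_le_mul _ hspecUt (spec_nonneg _) (by norm_num)
          exact mul_le_mul hspecU hspecSg (spec_nonneg _) zero_le_one
      _ = 1 := by norm_num
  have hT : spec (Xpᵀ * A * Xp) ≤ 1 := by
    calc spec (Xpᵀ * A * Xp) ≤ spec (Xpᵀ * A) * spec Xp := spec_mul_le _ _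
      _ ≤ spec Xpᵀ * spec A * spec Xp :=
          mul_le_mul_of_nonneg_right (spec_mul_le _ _) (spec_nonneg _)
      _ ≤ 1 * 1 * 1 := by
          apply mul_le_mul _ hspecXp (spec_nonneg _) (by norm_num)
          exact mul_le_mul hspecXpt hspecA (spec_nonneg _) zero_le_one
      _ = 1 := by norm_num
  -- symmetry facts
  have hSgT : Sgᵀ = Sg := by rw [hSg, Matrix.diagonal_transpose]
  have hAsymm : Aᵀ = A := by
    rw [hA, Matrix.transpose_mul, Matrix.transpose_mul, Matrix.transpose_transpose, hSgT,
      ← Matrix.mul_assoc]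
  set B : Matrix (Fin m) (Fin m) ℝ := Xp * Θ * Xpᵀ - A with hBdef
  have hBsymm : B.IsSymm := by
    unfold Matrix.IsSymm
    rw [hBdef, Matrix.transpose_sub, hAsymm, Matrix.transpose_mul, Matrix.transpose_mul,
      Matrix.transpose_transpose, hΘsym, ← Matrix.mul_assoc]
  -- rank bound
  have hrkB : B.rank + 1 ≤ r + r_A + 1 := by
    have hr1 : (Xp * Θ * Xpᵀ).rank ≤ r := by
      calc (Xp * Θ * Xpᵀ).rank ≤ (Xp * Θ).rank := Matrix.rank_mul_le_left _ _
        _ ≤ Xp.rank := Matrix.rank_mul_le_left _ _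
        _ ≤ Fintype.card (Fin r) := Matrix.rank_le_card_width _
        _ = r := Fintype.card_fin r
    have hr2 : (-A).rank ≤ r_A := by
      rw [rank_neg', hA]
      calc (U * Sg * Uᵀ).rank ≤ (U * Sg).rank := Matrix.rank_mul_le_left _ _
        _ ≤ U.rank := Matrix.rank_mul_le_left _ _
        _ ≤ Fintype.card (Fin r_A) := Matrix.rank_le_card_width _
        _ = r_A := Fintype.card_fin r_A
    have : B.rank ≤ r + r_A := by
      rw [hBdef, sub_eq_add_neg]
      calc (Xp * Θ * Xpᵀ + -A).rank ≤ (Xp * Θ * Xpᵀ).rank + (-A).rank := rank_add_le' _ _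
        _ ≤ r + r_A := add_le_add hr1 hr2
    omega
  -- Frobenius norm bound on B
  have hsqm : (0:ℝ) < Real.sqrt m := Real.sqrt_pos.mpr (by exact_mod_cast hm1)
  have hfrobB : frob B ≤ 3 * Real.sqrt m := by
    have hXTX : frob (Xp * Θ * Xpᵀ) = frob Θ := by
      rw [Matrix.mul_assoc, frob_mul_left_orth Xp hXX, ← frob_transpose,
        Matrix.transpose_mul, Matrix.transpose_transpose, frob_mul_left_orth Xp hXX,
        frob_transpose]
    have hfrobΘ : frob Θ ≤ Real.sqrt r * 2 := by
      calc frob Θ ≤ Real.sqrt r * spec Θ := frob_le_sqrt_spec Θ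
        _ ≤ Real.sqrt r * 2 := mul_le_mul_of_nonneg_left hΘ (Real.sqrt_nonneg _)
    have hfrobA : frob A ≤ Real.sqrt r_A := by
      have hfA : frob A = frob Sg := by
        rw [hA, Matrix.mul_assoc, frob_mul_left_orth U hUU, ← frob_transpose,
          Matrix.transpose_mul, Matrix.transpose_transpose, frob_mul_left_orth U hUU,
          frob_transpose]
      have hfSg : frob Sg ^ 2 ≤ r_A := by
        rw [hSg, frob_diagonal_sq]
        calc (∑ i, d i ^ 2) ≤ ∑ _i : Fin r_A, (1:ℝ) :=
              Finset.sum_le_sum fun i _ => by nlinarith [hd i, hdle i]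
          _ = r_A := by simp
      rw [hfA]
      calc frob Sg = Real.sqrt (frob Sg ^ 2) := (Real.sqrt_sq (frob_nonneg Sg)).symm
        _ ≤ Real.sqrt r_A := Real.sqrt_le_sqrt hfSg
    have hsr : Real.sqrt r ≤ Real.sqrt m := Real.sqrt_le_sqrt (by exact_mod_cast hrm)
    have hsrA : Real.sqrt r_A ≤ Real.sqrt m := Real.sqrt_le_sqrt (by exact_mod_cast hram)
    calc frob B ≤ frob (Xp * Θ * Xpᵀ) + frob A := frob_triangle_sub _ _
      _ ≤ Real.sqrt r * 2 + Real.sqrt r_A := by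
          rw [hXTX]; exact add_le_add hfrobΘ hfrobA
      _ ≤ Real.sqrt m * 2 + Real.sqrt m := by
          apply add_le_add _ hsrA
          exact mul_le_mul_of_nonneg_right hsr (by norm_num)
      _ = 3 * Real.sqrt m := by ring
  have hδ3m : δ * (3 * Real.sqrt m) ≤ 1 := by
    have h3m : (0:ℝ) < 3 * Real.sqrt m := by positivity
    calc δ * (3 * Real.sqrt m) ≤ (1 / (3 * Real.sqrt m)) * (3 * Real.sqrt m) :=
          mul_le_mul_of_nonneg_right hδ (le_of_lt h3m)
      _ = 1 := by field_simp
  -- the error term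
  have hEsymm : (calE Ms B).IsSymm := calE_symm Ms hMs B hBsymm
  have hSsymm : (Xpᵀ * calE Ms B * Xp).IsSymm := by
    unfold Matrix.IsSymm
    rw [Matrix.transpose_mul, Matrix.transpose_mul, Matrix.transpose_transpose, hEsymm,
      ← Matrix.mul_assoc]
  have hS : spec (Xpᵀ * calE Ms B * Xp) ≤ 1 := by
    apply spec_symm_le _ hSsymm 1 zero_le_one
    intro u hu
    have hv : ∑ i, (Xp *ᵥ u) i ^ 2 = 1 := by rw [sum_sq_mulVec Xp hXX]; exact hu
    have hquad := calE_quad_bound Ms hδ0 hRIP B hBsymm hrkB (Xp *ᵥ u) hv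
    have hrw : u ⬝ᵥ ((Xpᵀ * calE Ms B * Xp) *ᵥ u) = (Xp *ᵥ u) ⬝ᵥ (calE Ms B *ᵥ (Xp *ᵥ u)) := by
      rw [← Matrix.mulVec_mulVec, ← Matrix.mulVec_mulVec, Matrix.dotProduct_mulVec u Xpᵀ,
        Matrix.vecMul_transpose]
    rw [hrw]
    calc |(Xp *ᵥ u) ⬝ᵥ (calE Ms B *ᵥ (Xp *ᵥ u))| ≤ δ * frob B := hquad
      _ ≤ δ * (3 * Real.sqrt m) := mul_le_mul_of_nonneg_left hfrobB hδ0
      _ ≤ 1 := hδ3m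
  calc spec (Xpᵀ * A * Xp - Xpᵀ * calE Ms B * Xp)
      ≤ spec (Xpᵀ * A * Xp) + spec (Xpᵀ * calE Ms B * Xp) := spec_sub_le _ _
    _ ≤ 1 + 1 := add_le_add hT hS
    _ = 2 := by norm_num

end
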